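/- Let U ⊊ V be linear subspaces of polynomials over F = F_q with dim(V) = k, and suppose |bias(X)| ≤ ε q^{-k} for every X ∈ V \ U. Then any basis X = (X_1,...,X_k) of V consisting of forms, which contains a basis of U and satisfies X_1 ∉ U and deg(X_1) = max_i deg(X_i), is weak ε-regular. -/

import Mathlib

open MvPolynomial
open scoped BigOperators

namespace PaperDefs

variable (F : Type) [Field F] [Fintype F] [DecidableEq F]

/-- A multivariate polynomial is *reduced* if every variable occurs with degree at most `|F| - 1`.
Over a finite field, every function `F^n → F` has a unique reduced polynomial representative. -/
def ReducedPoly {n : ℕ} (P : MvPolynomial (Fin n) F) : Prop :=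
  ∀ i, P.degreeOf i ≤ Fintype.card F - 1

/-- `P` represents the function `f`. -/
def Represents {n : ℕ} (P : MvPolynomial (Fin n) F) (f : (Fin n → F) → F) : Prop :=
  ∀ x, MvPolynomial.eval x P = f x

/-- Degree of a polynomial function: total degree of its (unique) reduced representative. -/
noncomputable def degF {n : ℕ} (f : (Fin n → F) → F) : ℕ :=
  sInf {d | ∃ P : MvPolynomial (Fin n) F, ReducedPoly F P ∧ Represents F P f ∧ P.totalDegree = d}

/-- `f` is a form (homogeneous polynomial function) of degree `d ≥ 1`. -/
def IsFormOfDegree {n : ℕ} (f : (Fin n → F) → F) (d : ℕ) : Prop :=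
  0 < d ∧ ∃ P : MvPolynomial (Fin n) F, P ≠ 0 ∧ ReducedPoly F P ∧
    P.IsHomogeneous d ∧ Represents F P f

/-- `f` is a form: a homogeneous polynomial function of positive degree. -/
def IsForm {n : ℕ} (f : (Fin n → F) → F) : Prop := ∃ d, IsFormOfDegree F f d

/-- A function is non-constant. -/
def NonConstantFn {α β : Type*} (f : α → β) : Prop := ¬ ∃ c, ∀ x, f x = c

/-- A polynomial function is reducible if it is a product of two non-constant polynomial
functions. -/
def ReduciblePoly {n : ℕ} (f : (Fin n → F) → F) : Prop :=
  ∃ g h : (Fin n → F) → F, NonConstantFn g ∧ NonConstantFn h ∧ ∀ x, f x = g x * h x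

/-- Rank of a form of degree `d`: the least `r` such that the form is a sum of `r` reducible
forms of degree `d`; `∞` for `d ≤ 1`. -/
noncomputable def rkFormD {n : ℕ} (d : ℕ) (f : (Fin n → F) → F) : ℕ∞ :=
  if d ≤ 1 then ⊤ else
    sInf {r : ℕ∞ | ∃ k : ℕ, r = (k : ℕ∞) ∧ ∃ R : Fin k → (Fin n → F) → F,
      (∀ i, IsFormOfDegree F (R i) d ∧ ReduciblePoly F (R i)) ∧ ∀ x, f x = ∑ i, R i x}

/-- Rank of a general polynomial function: the rank of the highest-degree homogeneous part of
its reduced representative (`0` for constants). -/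
noncomputable def rkFun {n : ℕ} (f : (Fin n → F) → F) : ℕ∞ :=
  sInf {r : ℕ∞ | ∃ P : MvPolynomial (Fin n) F, ReducedPoly F P ∧ Represents F P f ∧
    r = if P.totalDegree = 0 then 0 else
      rkFormD F P.totalDegree
        (fun x => MvPolynomial.eval x ((MvPolynomial.homogeneousComponent P.totalDegree) P))}

/-- `U_R(V)`: the span of the polynomials in `V` of rank less than `R`. -/
noncomputable def lowRankSpan {n : ℕ} (V : Submodule F ((Fin n → F) → F)) (R : ℕ) :
    Submodule F ((Fin n → F) → F) :=
  Submodule.span F {f | f ∈ V ∧ rkFun F f < (R : ℕ∞)}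

/-- Degree of a subspace of polynomial functions: the largest degree of any of its members. -/
noncomputable def degSub {n : ℕ} (W : Submodule F ((Fin n → F) → F)) : ℕ :=
  sSup (degF F '' (W : Set ((Fin n → F) → F)))

/-- A subspace of polynomial functions is homogeneous if it is spanned by forms. -/
def IsHomogeneousSub {n : ℕ} (W : Submodule F ((Fin n → F) → F)) : Prop :=
  ∃ S : Set ((Fin n → F) → F), (∀ f ∈ S, IsForm F f) ∧ W = Submodule.span F S

/-- `V^↑`: the top-degree homogeneous component of `V` (the subspace consisting of `0`
together with the forms in `V` of degree `deg(V)`). -/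
noncomputable def topComponent {n : ℕ} (V : Submodule F ((Fin n → F) → F)) :
    Submodule F ((Fin n → F) → F) :=
  Submodule.span F {f | f ∈ V ∧ IsFormOfDegree F f (degSub F V)}

/-- `f ∈ F[X]`: `f` is a polynomial expression in `X₁, …, X_k`. -/
def InAlg {n k : ℕ} (X : Fin k → (Fin n → F) → F) (f : (Fin n → F) → F) : Prop :=
  ∃ G : MvPolynomial (Fin k) F, ∀ x, MvPolynomial.eval (fun i => X i x) G = f x

/-- `Pr[X = y]` over a uniformly random input of `F^n`. -/
noncomputable def prEq {n k : ℕ} (X : Fin k → (Fin n → F) → F) (y : Fin k → F) : ℝ :=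
  (Nat.card {x : Fin n → F // ∀ i, X i x = y i} : ℝ) / (Fintype.card F : ℝ) ^ n

/-- `Pr[X ∈ S]` over a uniformly random input of `F^n`. -/
noncomputable def prMem {n k : ℕ} (X : Fin k → (Fin n → F) → F) (S : Set (Fin k → F)) : ℝ :=
  (Nat.card {x : Fin n → F // (fun i => X i x) ∈ S} : ℝ) / (Fintype.card F : ℝ) ^ n

/-- A tuple `X = (X₀, X₁, …, X_k)` of forms is weak `ε`-regular: `X₀` has maximal degree and
for every `y`, `|Pr[X = y] - q⁻¹ Pr[X' = y']| ≤ ε q^{-(k+1)}`, where `X' = (X₁, …, X_k)`. -/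
def WeakRegular {n k : ℕ} (ε : ℝ) (X : Fin (k + 1) → (Fin n → F) → F) : Prop :=
  (∀ i, IsForm F (X i)) ∧
  (∀ i, degF F (X i) ≤ degF F (X 0)) ∧
  ∀ y : Fin (k + 1) → F,
    |prEq F X y -
      (Fintype.card F : ℝ)⁻¹ * prEq F (fun i : Fin k => X i.succ) (fun i : Fin k => y i.succ)|
      ≤ ε / (Fintype.card F : ℝ) ^ (k + 1)

/-- The bias of a polynomial function with respect to an additive character `χ`. -/
noncomputable def biasF {n : ℕ} (χ : AddChar F ℂ) (f : (Fin n → F) → F) : ℂ :=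
  (∑ x : Fin n → F, χ (f x)) / (Fintype.card F : ℂ) ^ n

/-- A tuple of forms `X = (X₁, …, X_r)` is `t`-rank-regular: every element of `Span(X)`
outside of some strict subspace has rank at least `t · r`. -/
def RankRegular {n r : ℕ} (t : ℕ) (X : Fin r → (Fin n → F) → F) : Prop :=
  ∃ U : Submodule F ((Fin n → F) → F), U < Submodule.span F (Set.range X) ∧
    ∀ f ∈ Submodule.span F (Set.range X), f ∉ U → ((t * r : ℕ) : ℕ∞) ≤ rkFun F f

/-- `P ⊆ F[X]` is a minimal decomposition: no strict subspace of `Span(X)` spanned by forms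
generates `P`. -/
def MinimalDecomp {n m r : ℕ} (P : Fin m → (Fin n → F) → F)
    (X : Fin r → (Fin n → F) → F) : Prop :=
  (∀ i, InAlg F X (P i)) ∧
  ∀ (k : ℕ) (Y : Fin k → (Fin n → F) → F), (∀ j, IsForm F (Y j)) →
    Submodule.span F (Set.range Y) < Submodule.span F (Set.range X) →
    ¬ ∀ i, InAlg F Y (P i)

/-- Degree of a univariate polynomial function: the degree of its reduced representative
(in which the variable has degree at most `|F| - 1`). -/
noncomputable def degU (u : F → F) : ℕ :=
  sInf {d | ∃ p : Polynomial F, p.natDegree ≤ Fintype.card F - 1 ∧ (∀ x, p.eval x = u x) ∧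
    p.natDegree = d}

/-- Univariate degree of a polynomial map `P : F^n → F^m`: the minimum degree of a
non-constant univariate polynomial curve whose image is contained in the image of `P`
(`∞` if no such curve exists, e.g. for constant maps). -/
noncomputable def udeg {n m : ℕ} (P : Fin m → (Fin n → F) → F) : ℕ∞ :=
  sInf {d : ℕ∞ | ∃ U : Fin m → F → F,
    NonConstantFn (fun t => fun i => U i t) ∧
    Set.range (fun t => fun i => U i t) ⊆ Set.range (fun x => fun i => P i x) ∧
    d = ((Finset.univ.sup fun i => degU F (U i) : ℕ) : ℕ∞)}

/-- Univariate degree of a single polynomial function `P : F^n → F`. -/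
noncomputable def udeg1 {n : ℕ} (f : (Fin n → F) → F) : ℕ∞ :=
  sInf {d : ℕ∞ | ∃ u : F → F, NonConstantFn u ∧ Set.range u ⊆ Set.range f ∧
    d = ((degU F u : ℕ) : ℕ∞)}

/-- `f` is `t`-reducible: a product of polynomial functions each of degree at most `t`. -/
def TReducible {n : ℕ} (t : ℝ) (f : (Fin n → F) → F) : Prop :=
  ∃ (s : ℕ) (g : Fin s → (Fin n → F) → F), (∀ j, (degF F (g j) : ℝ) ≤ t) ∧
    ∀ x, f x = ∏ j, g j x

/-- The line in `F^(k+1)` through `z` in direction `e₁`. -/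
def lineE1 {k : ℕ} (z : Fin (k + 1) → F) : Set (Fin (k + 1) → F) :=
  {y | ∃ t : F, y = t • (Pi.single (0 : Fin (k + 1)) (1 : F) : Fin (k + 1) → F) + z}


private lemma chi_map_sum {ι : Type*} (χ : AddChar F ℂ) (s : Finset ι) (f : ι → F) :
    χ (∑ i ∈ s, f i) = ∏ i ∈ s, χ (f i) := by
  classical
  induction s using Finset.cons_induction with
  | empty => simp
  | cons a s ha ih => rw [Finset.sum_cons, Finset.prod_cons, AddChar.map_add_eq_mul, ih]

private lemma chi_abs (χ : AddChar F ℂ) (a : F) : ‖χ a‖ = 1 := by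
  have h : χ a ^ Fintype.card F = 1 := by
    rw [← AddChar.map_nsmul_eq_pow, card_nsmul_eq_zero, AddChar.map_zero_eq_one]
  have h2 : ‖χ a‖ ^ Fintype.card F = 1 := by
    rw [← norm_pow, h, norm_one]
  have hq : Fintype.card F ≠ 0 := Fintype.card_ne_zero
  by_contra hne
  rcases lt_or_gt_of_ne hne with hlt | hgt
  · have := pow_lt_one₀ (norm_nonneg _) hlt hq
    rw [h2] at this; exact lt_irrefl _ this
  · have := one_lt_pow₀ hgt hq
    rw [h2] at this; exact lt_irrefl _ this

private lemma sum_char_indicator (χ : AddChar F ℂ) (hχ : χ ≠ 1) {m : ℕ} (c : Fin m → F) :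
    ∑ l : Fin m → F, χ (∑ i, l i * c i) =
      if (∀ i, c i = 0) then ((Fintype.card F : ℂ)) ^ m else 0 := by
  classical
  have hprim : χ.IsPrimitive := AddChar.IsPrimitive.of_ne_one hχ
  have hsum : ∀ a : F, ∑ t : F, χ (t * a) = if a = 0 then (Fintype.card F : ℂ) else 0 :=
    fun a => by
      rw [AddChar.sum_mulShift a hprim]
      split_ifs <;> simp
  calc ∑ l : Fin m → F, χ (∑ i, l i * c i)
      = ∑ l : Fin m → F, ∏ i, χ (l i * c i) :=
        Finset.sum_congr rfl fun l _ => chi_map_sum F χ _ _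
    _ = ∏ i, ∑ t : F, χ (t * c i) :=
        (Fintype.prod_sum (κ := fun _ : Fin m => F) (fun i t => χ (t * c i))).symm
    _ = ∏ i, (if c i = 0 then (Fintype.card F : ℂ) else 0) :=
        Finset.prod_congr rfl fun i _ => hsum (c i)
    _ = _ := by
        by_cases h : ∀ i, c i = 0
        · rw [if_pos h]
          simp [h, Finset.prod_const]
        · rw [if_neg h]
          push_neg at h
          obtain ⟨i, hi⟩ := h
          exact Finset.prod_eq_zero (Finset.mem_univ i) (if_neg hi)

private lemma card_eq_char_sum (χ : AddChar F ℂ) (hχ : χ ≠ 1) {n m : ℕ}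
    (Z : Fin m → (Fin n → F) → F) (y : Fin m → F) :
    (Fintype.card F : ℂ) ^ m * (Nat.card {x : Fin n → F // ∀ i, Z i x = y i} : ℂ) =
      ∑ l : Fin m → F, ∑ x : Fin n → F, χ (∑ i, l i * (Z i x - y i)) := by
  classical
  rw [Finset.sum_comm]
  have h2 : (Nat.card {x : Fin n → F // ∀ i, Z i x = y i} : ℂ)
      = ∑ x : Fin n → F, if (∀ i, Z i x = y i) then (1:ℂ) else 0 := by
    rw [Finset.sum_boole, Nat.card_eq_fintype_card, Fintype.card_subtype]
  rw [h2, Finset.mul_sum]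
  refine Finset.sum_congr rfl fun x _ => ?_
  rw [sum_char_indicator F χ hχ]
  simp only [sub_eq_zero]
  by_cases h : ∀ i, Z i x = y i <;> simp [h]

/-- If `U ⊊ V` with `dim V = k + 1` and every `X ∈ V \ U` has `|bias(X)| ≤ ε q^{-(k+1)}`,
then any basis of forms of `V` containing a basis of `U`, whose first member lies outside `U`
and has maximal degree, is weak `ε`-regular. -/
theorem weakRegular_of_bias (χ : AddChar F ℂ) (hχ : χ ≠ 1) (n k : ℕ)
    (U V : Submodule F ((Fin n → F) → F)) (hUV : U < V)
    (hdim : Module.finrank F V = k + 1) (ε : ℝ)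
    (hbias : ∀ f ∈ V, f ∉ U →
      ‖biasF F χ f‖ ≤ ε / (Fintype.card F : ℝ) ^ (k + 1))
    (X : Fin (k + 1) → (Fin n → F) → F)
    (hforms : ∀ i, IsForm F (X i))
    (hindep : LinearIndependent F X)
    (hspan : Submodule.span F (Set.range X) = V)
    (hUbasis : ∃ S : Set (Fin (k + 1)), Submodule.span F (X '' S) = U)
    (hX1 : X 0 ∉ U)
    (hdeg : ∀ i, degF F (X i) ≤ degF F (X 0)) :
    WeakRegular F ε X := by
  classical
  obtain ⟨S, hS⟩ := hUbasis
  have hqpos : 0 < Fintype.card F := Fintype.card_pos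
  have hqR : (0:ℝ) < (Fintype.card F : ℝ) := by exact_mod_cast hqpos
  have hqC : (Fintype.card F : ℂ) ≠ 0 := by exact_mod_cast hqpos.ne'
  -- nonnegativity of the bias bound
  have hX0V : X 0 ∈ V := by
    rw [← hspan]; exact Submodule.subset_span ⟨0, rfl⟩
  have hε0 : 0 ≤ ε / (Fintype.card F : ℝ) ^ (k + 1) :=
    le_trans (norm_nonneg _) (hbias (X 0) hX0V hX1)
  refine ⟨hforms, hdeg, ?_⟩
  intro y
  set T : (Fin (k+1) → F) → ℂ :=
    fun l => ∑ x : Fin n → F, χ (∑ i, l i * (X i x - y i)) with hT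
  set A : ℕ := Nat.card {x : Fin n → F // ∀ i, X i x = y i} with hA
  set B : ℕ := Nat.card {x : Fin n → F // ∀ i : Fin k, X i.succ x = y i.succ} with hB
  have key1 : (Fintype.card F : ℂ) ^ (k+1) * (A : ℂ) = ∑ l : Fin (k+1) → F, T l :=
    card_eq_char_sum F χ hχ X y
  have key2 : (Fintype.card F : ℂ) ^ k * (B : ℂ)
      = ∑ l : Fin k → F, ∑ x : Fin n → F, χ (∑ i : Fin k, l i * (X i.succ x - y i.succ)) :=
    card_eq_char_sum F χ hχ (fun i => X i.succ) (fun i => y i.succ)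
  -- split the sum over `l` according to `l 0`
  have hsplit : ∑ l : Fin (k+1) → F, T l
      = ∑ t : F, ∑ μ : Fin k → F, T (Fin.cons t μ) := by
    rw [← Equiv.sum_comp (Fin.consEquiv fun _ : Fin (k+1) => F) T, Fintype.sum_prod_type]
    rfl
  have hzero : ∀ μ : Fin k → F,
      T (Fin.cons 0 μ) = ∑ x : Fin n → F, χ (∑ i : Fin k, μ i * (X i.succ x - y i.succ)) := by
    intro μ
    refine Finset.sum_congr rfl fun x _ => ?_
    congr 1
    rw [Fin.sum_univ_succ]
    simp
  -- bound on each term with `t ≠ 0`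
  have hbound : ∀ t : F, t ≠ 0 → ∀ μ : Fin k → F,
      ‖T (Fin.cons t μ)‖
        ≤ ε / (Fintype.card F : ℝ) ^ (k + 1) * (Fintype.card F : ℝ) ^ n := by
    intro t ht μ
    set l : Fin (k+1) → F := Fin.cons t μ with hl
    set f : (Fin n → F) → F := fun x => ∑ i, l i * X i x with hf
    have hfeq : f = ∑ i, l i • X i := by
      funext x
      simp [hf, Finset.sum_apply]
    have hfV : f ∈ V := by
      rw [hfeq]
      refine Submodule.sum_mem _ fun i _ => Submodule.smul_mem _ _ ?_
      rw [← hspan]; exact Submodule.subset_span ⟨i, rfl⟩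
    have hl0 : l 0 ≠ 0 := by simpa [hl] using ht
    have hfU : f ∉ U := by
      intro hmem
      rw [← hS] at hmem
      rw [hfeq] at hmem
      obtain ⟨c, hc, hceq⟩ := (Finsupp.mem_span_image_iff_linearCombination F).mp hmem
      have h1 : Finsupp.linearCombination F X
          ((Finsupp.linearEquivFunOnFinite F F (Fin (k+1))).symm l) = ∑ i, l i • X i := by
        rw [Finsupp.linearCombination_eq_fintype_linearCombination_apply,
          Fintype.linearCombination_apply]
      have hcl : c = (Finsupp.linearEquivFunOnFinite F F (Fin (k+1))).symm l :=
        hindep (by rw [hceq, h1])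
      have h0S : (0 : Fin (k+1)) ∈ S := by
        have h0sup : (0 : Fin (k+1)) ∈ c.support := by
          rw [Finsupp.mem_support_iff, hcl]
          simpa [Finsupp.linearEquivFunOnFinite] using hl0
        exact hc h0sup
      exact hX1 (by rw [← hS]; exact Submodule.subset_span (Set.mem_image_of_mem X h0S))
    have hb := hbias f hfV hfU
    have hbiaseq : (∑ x : Fin n → F, χ (f x)) = biasF F χ f * (Fintype.card F : ℂ) ^ n := by
      rw [biasF, div_mul_cancel₀]
      exact pow_ne_zero _ hqC
    have hb2 : ‖∑ x : Fin n → F, χ (f x)‖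
        ≤ ε / (Fintype.card F : ℝ) ^ (k + 1) * (Fintype.card F : ℝ) ^ n := by
      rw [hbiaseq, norm_mul]
      have : ‖(Fintype.card F : ℂ) ^ n‖ = (Fintype.card F : ℝ) ^ n := by
        rw [norm_pow, Complex.norm_natCast]
      rw [this]
      exact mul_le_mul_of_nonneg_right hb (by positivity)
    have hTl : T l = χ (-∑ i, l i * y i) * ∑ x : Fin n → F, χ (f x) := by
      rw [hT]
      simp only []
      rw [Finset.mul_sum]
      refine Finset.sum_congr rfl fun x _ => ?_
      rw [← AddChar.map_add_eq_mul]
      congr 1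
      rw [hf]
      simp only [mul_sub]
      rw [Finset.sum_sub_distrib]
      ring
    calc ‖T l‖ = ‖χ (-∑ i, l i * y i)‖
          * ‖∑ x : Fin n → F, χ (f x)‖ := by rw [hTl, norm_mul]
      _ = ‖∑ x : Fin n → F, χ (f x)‖ := by rw [chi_abs, one_mul]
      _ ≤ _ := hb2
  -- assemble
  have hsum0 : ∑ t : F, ∑ μ : Fin k → F, T (Fin.cons t μ)
      = ∑ t ∈ Finset.univ \ {(0:F)}, (∑ μ : Fin k → F, T (Fin.cons t μ))
        + ∑ μ : Fin k → F, T (Fin.cons 0 μ) :=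
    Finset.sum_eq_sum_sdiff_singleton_add (Finset.mem_univ (0:F)) _
  set D : ℂ := ∑ t ∈ Finset.univ \ {(0:F)}, (∑ μ : Fin k → F, T (Fin.cons t μ)) with hD
  have keyD : (Fintype.card F : ℂ) ^ (k+1) * (A : ℂ)
      = D + (Fintype.card F : ℂ) ^ k * (B : ℂ) := by
    rw [key1, hsplit, hsum0, key2]
    congr 1
    exact Finset.sum_congr rfl fun μ _ => hzero μ
  have habsD : ‖D‖
      ≤ (Fintype.card F : ℝ) ^ (k+1)
        * (ε / (Fintype.card F : ℝ) ^ (k + 1) * (Fintype.card F : ℝ) ^ n) := by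
    have hinner : ∀ t : F, t ≠ 0 → ‖∑ μ : Fin k → F, T (Fin.cons t μ)‖
        ≤ (Fintype.card F : ℝ) ^ k
          * (ε / (Fintype.card F : ℝ) ^ (k + 1) * (Fintype.card F : ℝ) ^ n) := by
      intro t ht
      calc ‖∑ μ : Fin k → F, T (Fin.cons t μ)‖
          ≤ ∑ μ : Fin k → F, ‖T (Fin.cons t μ)‖ :=
            norm_sum_le _ _
        _ ≤ ∑ _μ : Fin k → F, (ε / (Fintype.card F : ℝ) ^ (k + 1) * (Fintype.card F : ℝ) ^ n) :=
            Finset.sum_le_sum fun μ _ => hbound t ht μ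
        _ = (Fintype.card F : ℝ) ^ k
            * (ε / (Fintype.card F : ℝ) ^ (k + 1) * (Fintype.card F : ℝ) ^ n) := by
            rw [Finset.sum_const, Finset.card_univ, Fintype.card_fun, Fintype.card_fin,
              nsmul_eq_mul]
            push_cast
            ring
    calc ‖D‖ ≤ ∑ t ∈ Finset.univ \ {(0:F)},
          ‖∑ μ : Fin k → F, T (Fin.cons t μ)‖ := norm_sum_le _ _
      _ ≤ ∑ _t ∈ Finset.univ \ {(0:F)}, ((Fintype.card F : ℝ) ^ k
            * (ε / (Fintype.card F : ℝ) ^ (k + 1) * (Fintype.card F : ℝ) ^ n)) := by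
          refine Finset.sum_le_sum fun t htmem => ?_
          have ht : t ≠ 0 := by
            simpa [Finset.mem_sdiff] using htmem
          exact hinner t ht
      _ ≤ (Fintype.card F : ℝ) * ((Fintype.card F : ℝ) ^ k
            * (ε / (Fintype.card F : ℝ) ^ (k + 1) * (Fintype.card F : ℝ) ^ n)) := by
          rw [Finset.sum_const, nsmul_eq_mul]
          refine mul_le_mul_of_nonneg_right ?_ (by positivity)
          have : (Finset.univ \ {(0:F)}).card ≤ Fintype.card F := by
            refine le_trans (Finset.card_le_card (Finset.sdiff_subset)) ?_
            simp [Finset.card_univ]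
          exact_mod_cast this
      _ = (Fintype.card F : ℝ) ^ (k+1)
            * (ε / (Fintype.card F : ℝ) ^ (k + 1) * (Fintype.card F : ℝ) ^ n) := by
          ring
  -- finish: express the goal as `D` over the normalization
  have hgoalC : ((prEq F X y
      - (Fintype.card F : ℝ)⁻¹ * prEq F (fun i : Fin k => X i.succ) (fun i : Fin k => y i.succ)
      : ℝ) : ℂ)
      = D / ((Fintype.card F : ℂ) ^ (k+1) * (Fintype.card F : ℂ) ^ n) := by
    have hpr1 : prEq F X y = (A : ℝ) / (Fintype.card F : ℝ) ^ n := rfl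
    have hpr2 : prEq F (fun i : Fin k => X i.succ) (fun i : Fin k => y i.succ)
        = (B : ℝ) / (Fintype.card F : ℝ) ^ n := rfl
    rw [hpr1, hpr2]
    have hD' : D = (Fintype.card F : ℂ) ^ (k+1) * (A : ℂ)
        - (Fintype.card F : ℂ) ^ k * (B : ℂ) := by rw [keyD]; ring
    rw [hD']
    push_cast
    field_simp
    ring
  have habs : |prEq F X y
      - (Fintype.card F : ℝ)⁻¹ * prEq F (fun i : Fin k => X i.succ) (fun i : Fin k => y i.succ)|
      = ‖D‖ / ((Fintype.card F : ℝ) ^ (k+1) * (Fintype.card F : ℝ) ^ n) := by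
    rw [← Real.norm_eq_abs, ← Complex.norm_real, hgoalC, norm_div, norm_mul, norm_pow, norm_pow,
      Complex.norm_natCast]
  rw [habs]
  rw [div_le_iff₀ (by positivity)]
  calc ‖D‖ ≤ (Fintype.card F : ℝ) ^ (k+1)
        * (ε / (Fintype.card F : ℝ) ^ (k + 1) * (Fintype.card F : ℝ) ^ n) := habsD
    _ = ε / (Fintype.card F : ℝ) ^ (k + 1)
        * ((Fintype.card F : ℝ) ^ (k+1) * (Fintype.card F : ℝ) ^ n) := by ring

end PaperDefs
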